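/- For any integer n ≥ 1 and real δ with 0 ≤ δ ≤ 1/2, the sum of binomial coefficients ∑_{w=0}^{⌊nδ⌋} C(n,w) is at most 2^{n·h(δ)}, where h(x) = -x·log₂x - (1-x)·log₂(1-x) is the binary entropy function. -/
import Mathlib

noncomputable def binEnt (x : ℝ) : ℝ :=
  -(x * Real.logb 2 x) - (1 - x) * Real.logb 2 (1 - x)

theorem stmt_0 (n : ℕ) (hn : 1 ≤ n) (δ : ℝ) (hδ0 : 0 ≤ δ) (hδ : δ ≤ 1/2) :
    (∑ w ∈ Finset.range (⌊(n : ℝ) * δ⌋₊ + 1), (n.choose w : ℝ)) ≤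
      (2 : ℝ) ^ ((n : ℝ) * binEnt δ) := by
  rcases eq_or_lt_of_le hδ0 with h0 | h0
  · -- δ = 0
    have : δ = 0 := h0.symm
    subst this
    simp [binEnt]
  · -- 0 < δ
    have h1 : δ < 1 := lt_of_le_of_lt hδ (by norm_num)
    have h1' : (0:ℝ) < 1 - δ := by linarith
    set m := ⌊(n : ℝ) * δ⌋₊ with hm
    have hmle : (m : ℝ) ≤ (n : ℝ) * δ := Nat.floor_le (by positivity)
    -- A = δ^{nδ} (1-δ)^{n(1-δ)}
    set A : ℝ := δ ^ ((n:ℝ)*δ) * (1-δ) ^ ((n:ℝ)*(1-δ)) with hA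
    have hApos : 0 < A := by positivity
    have key : (∑ w ∈ Finset.range (m + 1), (n.choose w : ℝ)) * A ≤ 1 := by
      rw [Finset.sum_mul]
      have step : ∀ w ∈ Finset.range (m + 1),
          (n.choose w : ℝ) * A ≤ (n.choose w : ℝ) * (δ ^ w * (1-δ) ^ (n - w)) := by
        intro w hw
        have hwm : w ≤ m := Nat.lt_succ_iff.mp (Finset.mem_range.mp hw)
        have hwr : (w : ℝ) ≤ (n:ℝ) * δ := le_trans (by exact_mod_cast hwm) hmle
        have hwn : w ≤ n := by
          have : (n:ℝ) * δ ≤ n := by nlinarith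
          exact_mod_cast hwr.trans this
        apply mul_le_mul_of_nonneg_left _ (by positivity)
        have h2 : δ ^ w * (1-δ) ^ (n - w)
            = δ ^ ((w:ℝ)) * (1-δ) ^ (((n:ℝ) - w)) := by
          rw [← Real.rpow_natCast δ w, ← Real.rpow_natCast (1-δ) (n - w)]
          congr 1
          congr 1
          push_cast [Nat.cast_sub hwn]
          ring
        rw [h2]
        set t : ℝ := (n:ℝ)*δ - w with ht
        have ht0 : 0 ≤ t := by rw [ht]; linarith
        have ea : (n:ℝ)*δ = (w:ℝ) + t := by rw [ht]; ring
        have eb : (n:ℝ)*(1-δ) = ((n:ℝ) - w) + (-t) := by rw [ht]; ring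
        have e1 : A = (δ ^ ((w:ℝ)) * (1-δ) ^ ((n:ℝ) - w)) * (δ ^ t * ((1-δ) ^ t)⁻¹) := by
          rw [hA, ea, eb, Real.rpow_add h0, Real.rpow_add h1', Real.rpow_neg h1'.le]
          ring
        have hle1 : δ ^ t * ((1-δ) ^ t)⁻¹ ≤ 1 := by
          rw [← div_eq_mul_inv, ← Real.div_rpow hδ0 h1'.le]
          exact Real.rpow_le_one (by positivity) (by rw [div_le_one h1']; linarith) ht0
        have hR : 0 ≤ δ ^ ((w:ℝ)) * (1-δ) ^ ((n:ℝ) - w) := by positivity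
        rw [e1]
        exact mul_le_of_le_one_right hR hle1
      calc ∑ w ∈ Finset.range (m + 1), (n.choose w : ℝ) * A
          ≤ ∑ w ∈ Finset.range (m + 1), (n.choose w : ℝ) * (δ ^ w * (1-δ) ^ (n - w)) :=
            Finset.sum_le_sum step
        _ ≤ ∑ w ∈ Finset.range (n + 1), (n.choose w : ℝ) * (δ ^ w * (1-δ) ^ (n - w)) := by
            apply Finset.sum_le_sum_of_subset_of_nonneg
            · apply Finset.range_subset_range.mpr
              have : (m:ℝ) ≤ n := hmle.trans (by nlinarith)
              exact Nat.succ_le_succ (by exact_mod_cast this)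
            · intro i _ _; positivity
        _ = 1 := by
            have h := add_pow δ (1-δ) n
            simp only [add_sub_cancel, one_pow] at h
            rw [show (∑ w ∈ Finset.range (n + 1), (n.choose w : ℝ) * (δ ^ w * (1-δ) ^ (n - w)))
                = ∑ w ∈ Finset.range (n + 1), δ ^ w * (1-δ) ^ (n - w) * (n.choose w : ℝ) from
              Finset.sum_congr rfl fun i _ => by ring]
            exact h.symm
    -- conclude
    have hS : (∑ w ∈ Finset.range (m + 1), (n.choose w : ℝ)) ≤ 1 / A :=
      (le_div_iff₀ hApos).mpr key
    have hδe : (2:ℝ) ^ (Real.logb 2 δ * ((n:ℝ)*δ)) = δ ^ ((n:ℝ)*δ) := by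
      rw [Real.rpow_mul (by norm_num), Real.rpow_logb two_pos (by norm_num) h0]
    have h1e : (2:ℝ) ^ (Real.logb 2 (1-δ) * ((n:ℝ)*(1-δ))) = (1-δ) ^ ((n:ℝ)*(1-δ)) := by
      rw [Real.rpow_mul (by norm_num), Real.rpow_logb two_pos (by norm_num) h1']
    have hAeq : 1 / A = (2:ℝ) ^ ((n:ℝ) * binEnt δ) := by
      rw [one_div, hA, ← hδe, ← h1e, ← Real.rpow_add (by norm_num),
        ← Real.rpow_neg (by norm_num)]
      congr 1
      unfold binEnt
      ring
    rwa [hAeq] at hS
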